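/- Let θ̂ be the unique real with p_A·Φ^c((θ̂ − μ)/s_A) + p_B·Φ^c((θ̂ − μ)/s_B) = α₁, and set x_A = Φ^c((θ̂ − μ)/s_A), x_B = Φ^c((θ̂ − μ)/s_B) (the group-oblivious selection fractions of the two groups). Then: (i) if α₁ < 1/2 then x_B < α₁ < x_A (the high-variance group A is overselected and the low-variance group B is underselected); (ii) if α₁ = 1/2 then x_A = x_B = 1/2; (iii) if α₁ > 1/2 then x_A < α₁ < x_B. -/
import Mathlib


open MeasureTheory Set

/-- Standard normal density. -/
noncomputable def phi (t : ℝ) : ℝ := Real.exp (-t ^ 2 / 2) / Real.sqrt (2 * Real.pi)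

/-- Standard normal CDF. -/
noncomputable def Phi (t : ℝ) : ℝ := ∫ u in Set.Iic t, phi u

/-- Standard normal complementary CDF. -/
noncomputable def Phic (t : ℝ) : ℝ := 1 - Phi t


lemma phi_pos (t : ℝ) : 0 < phi t := by
  apply div_pos (Real.exp_pos _)
  exact Real.sqrt_pos.2 (by positivity)

lemma phi_cont : Continuous phi := by
  unfold phi
  fun_prop

lemma phi_eq (t : ℝ) : phi t = Real.exp (-(1/2) * t ^ 2) / Real.sqrt (2 * Real.pi) := by
  unfold phi; ring_nf

lemma integrable_phi : Integrable phi := by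
  have h := integrable_exp_neg_mul_sq (by norm_num : (0:ℝ) < 1/2)
  have := h.div_const (Real.sqrt (2 * Real.pi))
  convert this using 2 with t
  rw [phi_eq]

lemma integral_phi : ∫ t, phi t = 1 := by
  have h : ∫ t, phi t = (∫ t, Real.exp (-(1/2) * t ^ 2)) / Real.sqrt (2 * Real.pi) := by
    rw [← integral_div]
    exact integral_congr_ae (Filter.Eventually.of_forall fun t => phi_eq t)
  rw [h, integral_gaussian]
  rw [show Real.pi / (1/2) = 2 * Real.pi by ring]
  rw [div_self (by positivity : Real.sqrt (2 * Real.pi) ≠ 0)]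

lemma Phi_strictMono : StrictMono Phi := by
  intro a b hab
  have h : Phi b - Phi a = ∫ x in a..b, phi x :=
    intervalIntegral.integral_Iic_sub_Iic integrable_phi.integrableOn integrable_phi.integrableOn
  have hpos : 0 < ∫ x in a..b, phi x :=
    intervalIntegral.intervalIntegral_pos_of_pos (f := phi)
      integrable_phi.intervalIntegrable (fun x => phi_pos x) hab
  linarith

lemma Phi_zero : Phi 0 = 1/2 := by
  have heven : ∫ u in Iic (0:ℝ), phi u = ∫ u in Ioi (0:ℝ), phi u := by
    rw [show Ioi (0:ℝ) = Ioi (-0) by norm_num, ← integral_comp_neg_Iic (0:ℝ) phi]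
    apply integral_congr_ae (Filter.Eventually.of_forall fun t => ?_)
    unfold phi; rw [neg_pow]; norm_num
  have hsplit : (∫ u in Iic (0:ℝ), phi u) + ∫ u in Ioi (0:ℝ), phi u = ∫ u, phi u :=
    intervalIntegral.integral_Iic_add_Ioi integrable_phi.integrableOn integrable_phi.integrableOn
  rw [integral_phi] at hsplit
  unfold Phi
  rw [heven] at hsplit ⊢
  linarith

lemma Phic_strictAnti : StrictAnti Phic := by
  intro a b hab
  unfold Phic
  linarith [Phi_strictMono hab]

lemma Phic_zero : Phic 0 = 1/2 := by unfold Phic; rw [Phi_zero]; norm_num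


/-- Under group-oblivious selection with threshold `θ̂` (given by the budget
equation), the selection fractions `x_A = Φᶜ((θ̂-μ)/s_A)`, `x_B = Φᶜ((θ̂-μ)/s_B)`
satisfy: `x_B < α₁ < x_A` if `α₁ < 1/2`; `x_A = x_B = 1/2` if `α₁ = 1/2`;
`x_A < α₁ < x_B` if `α₁ > 1/2`. -/
theorem group_oblivious_selection_fractions
    (μ σW σA σB pA α₁ θhat : ℝ)
    (hσW : 0 < σW) (hσB : 0 ≤ σB) (hσAB : σB < σA)
    (hpA : pA ∈ Set.Ioo (0 : ℝ) 1) (hα : α₁ ∈ Set.Ioo (0 : ℝ) 1)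
    (hθ : pA * Phic ((θhat - μ) / Real.sqrt (σW ^ 2 + σA ^ 2))
        + (1 - pA) * Phic ((θhat - μ) / Real.sqrt (σW ^ 2 + σB ^ 2)) = α₁) :
    (α₁ < 1 / 2 →
      Phic ((θhat - μ) / Real.sqrt (σW ^ 2 + σB ^ 2)) < α₁ ∧
      α₁ < Phic ((θhat - μ) / Real.sqrt (σW ^ 2 + σA ^ 2))) ∧
    (α₁ = 1 / 2 →
      Phic ((θhat - μ) / Real.sqrt (σW ^ 2 + σA ^ 2)) = 1 / 2 ∧
      Phic ((θhat - μ) / Real.sqrt (σW ^ 2 + σB ^ 2)) = 1 / 2) ∧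
    (1 / 2 < α₁ →
      Phic ((θhat - μ) / Real.sqrt (σW ^ 2 + σA ^ 2)) < α₁ ∧
      α₁ < Phic ((θhat - μ) / Real.sqrt (σW ^ 2 + σB ^ 2))) := by
  obtain ⟨hp0, hp1⟩ := hpA
  set t := θhat - μ with ht
  set sA := Real.sqrt (σW ^ 2 + σA ^ 2) with hsAdef
  set sB := Real.sqrt (σW ^ 2 + σB ^ 2) with hsBdef
  have hsBpos : 0 < sB := Real.sqrt_pos.2 (by positivity)
  have hsBA : sB < sA := by
    apply Real.sqrt_lt_sqrt (by positivity)
    nlinarith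
  have hsApos : 0 < sA := lt_trans hsBpos hsBA
  set xA := Phic (t / sA) with hxA
  set xB := Phic (t / sB) with hxB
  rcases lt_trichotomy t 0 with htneg | htz | htpos
  · -- t < 0 : t/sB < t/sA < 0, xB > xA > 1/2
    have h1 : t / sB < t / sA := by
      rw [div_lt_div_iff₀ hsBpos hsApos]
      nlinarith
    have h2 : t / sA < 0 := div_neg_of_neg_of_pos htneg hsApos
    have hAB : xA < xB := Phic_strictAnti h1
    have hAh : (1:ℝ)/2 < xA := by
      have := Phic_strictAnti h2
      rwa [Phic_zero] at this
    have hm1 : xA < α₁ := by nlinarith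
    have hm2 : α₁ < xB := by nlinarith
    refine ⟨fun h => absurd h (by linarith), fun h => absurd h (by linarith), fun _ => ⟨hm1, hm2⟩⟩
  · -- t = 0
    have hA0 : xA = 1/2 := by rw [hxA, htz, zero_div, Phic_zero]
    have hB0 : xB = 1/2 := by rw [hxB, htz, zero_div, Phic_zero]
    have hα12 : α₁ = 1/2 := by rw [← hθ, hA0, hB0]; ring
    exact ⟨fun h => absurd h (by linarith), fun _ => ⟨hA0, hB0⟩,
      fun h => absurd h (by linarith)⟩
  · -- t > 0 : 0 < t/sA < t/sB, xB < xA < 1/2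
    have h1 : t / sA < t / sB := by
      rw [div_lt_div_iff₀ hsApos hsBpos]
      nlinarith
    have h2 : 0 < t / sA := div_pos htpos hsApos
    have hBA : xB < xA := Phic_strictAnti h1
    have hAh : xA < 1/2 := by
      have := Phic_strictAnti h2
      rwa [Phic_zero] at this
    have hm1 : xB < α₁ := by nlinarith
    have hm2 : α₁ < xA := by nlinarith
    refine ⟨fun _ => ⟨hm1, hm2⟩, fun h => absurd h (by linarith), fun h => absurd h (by linarith)⟩
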